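/- Let R be a discrete valuation ring, A an order over R, and I = Ann_R(A^†/A). Then the pairing (x+A, y+A) ↦ Tr_{Q(A)/Q(R)}(xy) + R defines a well-defined non-degenerate symmetric R/I-bilinear form A^†/A × A^†/A → I^{-1}/R. -/

import Mathlib

section

variable (R : Type*) [CommRing R] [IsDomain R] [IsDiscreteValuationRing R]
  (A : Type*) [CommRing A] [Nontrivial A] [Algebra R A]
  [Module.Finite R A] [NoZeroSMulDivisors R A]
  (QA : Type*) [CommRing QA] [Algebra A QA] [Algebra R QA] [IsScalarTower R A QA]
  [Algebra (FractionRing R) QA] [IsScalarTower R (FractionRing R) QA]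

/-- The trace dual `A^† = {x ∈ QA : Tr_{Q(A)/Q(R)}(x·A) ⊆ R}` as an `R`-submodule
of the total quotient ring `QA`. -/
noncomputable def traceDualSubmodule : Submodule R QA where
  carrier := {x : QA | ∀ a : A, Algebra.trace (FractionRing R) QA (x * algebraMap A QA a) ∈
    Set.range (algebraMap R (FractionRing R))}
  zero_mem' := fun a => ⟨0, by simp⟩
  add_mem' := by
    rintro x y hx hy a
    obtain ⟨b, hb⟩ := hx a
    obtain ⟨c, hc⟩ := hy a
    exact ⟨b + c, by rw [map_add, hb, hc, add_mul, map_add]⟩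
  smul_mem' := by
    rintro r x hx a
    obtain ⟨b, hb⟩ := hx a
    refine ⟨r * b, ?_⟩
    rw [map_mul, hb, smul_mul_assoc, LinearMap.map_smul_of_tower, Algebra.smul_def]

/-- The image of `A` in `QA`, as an `R`-submodule. -/
noncomputable def imageOfOrder : Submodule R QA :=
  LinearMap.range ((IsScalarTower.toAlgHom R A QA).toLinearMap)

/-- The image of `R` in `Q(R)`, as an `R`-submodule. -/
noncomputable def imageOfBase : Submodule R (FractionRing R) :=
  LinearMap.range (Algebra.linearMap R (FractionRing R))

set_option maxHeartbeats 2000000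

/-- Let `R` be a DVR, `A` an order over `R` with total quotient ring `QA` (finite étale
over `Q(R)`), and `I = Ann_R(A^†/A)`.  The pairing
`(x+A, y+A) ↦ Tr_{Q(A)/Q(R)}(x·y) + R` is a well-defined symmetric `R`-bilinear form on
`A^†/A` with values in `I⁻¹/R ⊆ Q(R)/R`, and it is non-degenerate: the induced map
`A^†/A → Hom_R(A^†/A, I⁻¹/R)` is an isomorphism (equivalently, the induced map into
`Hom_R(A^†/A, Q(R)/R)` is bijective, every such homomorphism having image killed
by `I`). -/
theorem traceDual_pairing_nondegenerate
    [IsLocalization (Algebra.algebraMapSubmonoid A (nonZeroDivisors R)) QA]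
    [Module.Finite (FractionRing R) QA]
    (hEt : (Algebra.traceForm (FractionRing R) QA).Nondegenerate) :
    ∃ b : (traceDualSubmodule R A QA ⧸
            ((imageOfOrder R A QA).comap (traceDualSubmodule R A QA).subtype)) →ₗ[R]
          (traceDualSubmodule R A QA ⧸
            ((imageOfOrder R A QA).comap (traceDualSubmodule R A QA).subtype)) →ₗ[R]
          ((FractionRing R) ⧸ imageOfBase R),
      (∀ (x y : QA) (hx : x ∈ traceDualSubmodule R A QA) (hy : y ∈ traceDualSubmodule R A QA),
        b (Submodule.Quotient.mk ⟨x, hx⟩) (Submodule.Quotient.mk ⟨y, hy⟩) =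
          Submodule.Quotient.mk (Algebra.trace (FractionRing R) QA (x * y))) ∧
      (∀ u v, b u v = b v u) ∧
      (∀ u v, ∃ w : FractionRing R,
        (∀ r : R, (∀ y ∈ traceDualSubmodule R A QA, r • y ∈ imageOfOrder R A QA) →
          r • w ∈ imageOfBase R) ∧
        b u v = Submodule.Quotient.mk w) ∧
      Function.Bijective ⇑b := by
  classical
  set K := FractionRing R with hKdef
  set N := traceDualSubmodule R A QA with hNdef
  set M' := (imageOfOrder R A QA).comap N.subtype with hM'def
  set B := Algebra.traceForm K QA with hBdef
  let bA := Module.Free.chooseBasis R A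
  let bQ := bA.localizationLocalization K (nonZeroDivisors R) QA
  set d := B.dualBasis hEt bQ with hddef
  have hbQ : ∀ i, bQ i = algebraMap A QA (bA i) :=
    fun i => bA.localizationLocalization_apply K (nonZeroDivisors R) QA i
  -- M = span of bQ
  have hM : imageOfOrder R A QA = Submodule.span R (Set.range bQ) := by
    rw [Module.Basis.localizationLocalization_span]
    rfl
  -- N = dual submodule of M
  have hN : N = B.dualSubmodule (imageOfOrder R A QA) := by
    ext x
    constructor
    · rintro hx y ⟨a, rfl⟩
      obtain ⟨r, hr⟩ := hx a
      refine Submodule.mem_one.mpr ⟨r, ?_⟩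
      rw [hr]
      rfl
    · intro hx a
      obtain ⟨r, hr⟩ := Submodule.mem_one.mp (hx (algebraMap A QA a)
        ⟨a, rfl⟩)
      exact ⟨r, hr⟩
  have hNd : N = Submodule.span R (Set.range d) := by
    rw [hN, hM, LinearMap.BilinForm.dualSubmodule_span_of_basis B hEt bQ]
  -- trace computations
  have hsymmB : B.IsSymm := Algebra.traceForm_isSymm K
  have L1 : ∀ (x : QA) (i), Algebra.trace K QA (x * bQ i) = d.repr x i := by
    intro x i
    rw [hddef, LinearMap.BilinForm.dualBasis_repr_apply]
    rfl
  have hdd : B.dualBasis hEt d = bQ := by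
    rw [hddef]
    exact LinearMap.BilinForm.dualBasis_dualBasis hEt hsymmB bQ
  have L2 : ∀ (x : QA) (i), Algebra.trace K QA (x * d i) = bQ.repr x i := by
    intro x i
    conv_rhs => rw [← hdd]
    rw [LinearMap.BilinForm.dualBasis_repr_apply]
    rfl
  -- a basis for N
  have hinj : Function.Injective fun r : R => r • (1 : K) := by
    have : (fun r : R => r • (1 : K)) = algebraMap R K := by
      ext r; rw [Algebra.algebraMap_eq_smul_one]
    rw [this]
    exact IsFractionRing.injective R K
  have lin_d : LinearIndependent R (⇑d) :=
    d.linearIndependent.restrict_scalars hinj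
  let bN : Module.Basis (Module.Free.ChooseBasisIndex R A) R N :=
    (Module.Basis.span lin_d).map (LinearEquiv.ofEq _ _ hNd.symm)
  have hbN : ∀ i, (bN i : QA) = d i := by
    intro i
    rw [Module.Basis.map_apply, LinearEquiv.coe_ofEq_apply]
    exact congrArg Subtype.val (Module.Basis.span_apply lin_d i)
  -- the R-linear trace
  let T : QA →ₗ[R] K := (Algebra.trace K QA).restrictScalars R
  let π : K →ₗ[R] K ⧸ imageOfBase R := (imageOfBase R).mkQ
  -- the pairing on N
  let φ₀ : N →ₗ[R] N →ₗ[R] (K ⧸ imageOfBase R) :=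
    LinearMap.mk₂ R (fun x y : N => π (T ((x : QA) * (y : QA))))
      (fun x x' y => by simp [add_mul])
      (fun r x y => by simp [smul_mul_assoc])
      (fun x y y' => by simp [mul_add])
      (fun r x y => by simp [mul_smul_comm])
  have hφ₀ : ∀ x y : N, φ₀ x y = π (Algebra.trace K QA ((x : QA) * (y : QA))) := fun _ _ => rfl
  have hmemIm : ∀ z : K, z ∈ Set.range (algebraMap R K) → z ∈ imageOfBase R := by
    rintro z ⟨r, hr⟩
    exact ⟨r, hr⟩
  have hv1 : ∀ (x : N) (y : N), (y : QA) ∈ imageOfOrder R A QA → φ₀ x y = 0 := by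
    rintro x y ⟨a, ha⟩
    rw [hφ₀]
    have ha' : (y : QA) = algebraMap A QA a := ha.symm
    rw [ha', Submodule.mkQ_apply, Submodule.Quotient.mk_eq_zero]
    exact hmemIm _ (x.2 a)
  have hsymm₀ : ∀ x y : N, φ₀ x y = φ₀ y x := by
    intro x y
    rw [hφ₀, hφ₀, mul_comm]
  have hv2 : ∀ (x : N) (y : N), (x : QA) ∈ imageOfOrder R A QA → φ₀ x y = 0 := by
    intro x y hx
    rw [hsymm₀]
    exact hv1 y x hx
  -- descend to the quotient
  let φ₁ : N →ₗ[R] ((N ⧸ M') →ₗ[R] (K ⧸ imageOfBase R)) :=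
    { toFun := fun x => M'.liftQ (φ₀ x) (fun y hy => hv1 x y hy)
      map_add' := fun x x' => by
        apply Submodule.linearMap_qext
        ext y
        simp
        rfl
      map_smul' := fun r x => by
        apply Submodule.linearMap_qext
        ext y
        simp
        rfl }
  refine ⟨M'.liftQ φ₁ (fun x hx => ?_), ?_, ?_, ?_, ?_⟩
  · apply Submodule.linearMap_qext
    ext y
    exact hv2 x y hx
  · intro x y hx hy
    rfl
  · -- symmetry
    intro u v
    obtain ⟨x, rfl⟩ := Submodule.Quotient.mk_surjective M' u
    obtain ⟨y, rfl⟩ := Submodule.Quotient.mk_surjective M' v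
    exact hsymm₀ x y
  · -- values lie in I⁻¹/R
    intro u v
    obtain ⟨x, rfl⟩ := Submodule.Quotient.mk_surjective M' u
    obtain ⟨y, rfl⟩ := Submodule.Quotient.mk_surjective M' v
    refine ⟨Algebra.trace K QA ((x : QA) * (y : QA)), ?_, rfl⟩
    intro r hr
    obtain ⟨a, ha⟩ := hr (x : QA) x.2
    have ha' : algebraMap A QA a = r • (x : QA) := ha
    obtain ⟨s, hs⟩ := y.2 a
    refine ⟨s, ?_⟩
    show algebraMap R K s = _
    rw [hs, ha', mul_smul_comm, LinearMap.map_smul_of_tower, mul_comm]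
  · constructor
    · -- injectivity
      rw [injective_iff_map_eq_zero]
      intro u hu
      obtain ⟨x, rfl⟩ := Submodule.Quotient.mk_surjective M' u
      rw [Submodule.Quotient.mk_eq_zero]
      show (x : QA) ∈ imageOfOrder R A QA
      rw [hM]
      rw [← bQ.sum_repr (x : QA)]
      apply Submodule.sum_mem
      intro i _
      have hdiN : d i ∈ N := by rw [hNd]; exact Submodule.subset_span ⟨i, rfl⟩
      have h0 : π (Algebra.trace K QA ((x : QA) * d i)) = 0 := by
        have h := LinearMap.congr_fun hu (Submodule.Quotient.mk (⟨d i, hdiN⟩ : N))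
        rw [LinearMap.zero_apply] at h
        exact h
      rw [Submodule.mkQ_apply, Submodule.Quotient.mk_eq_zero] at h0
      obtain ⟨r, hr⟩ := h0
      have hri : bQ.repr (x : QA) i = algebraMap R K r := by
        rw [← L2, ← hr]; rfl
      rw [hri, algebraMap_smul]
      exact Submodule.smul_mem _ _ (Submodule.subset_span ⟨i, rfl⟩)
    · -- surjectivity
      intro ψ
      have htr : ∀ c : A, Algebra.trace K QA (algebraMap A QA c) ∈
          Set.range (algebraMap R K) :=
        fun c => ⟨Algebra.trace R A c,
          (Algebra.trace_localization (Rₘ := K) (Sₘ := QA) R (nonZeroDivisors R) c).symm⟩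
      have hMN : imageOfOrder R A QA ≤ N := by
        rintro z ⟨a, rfl⟩
        intro a'
        show Algebra.trace K QA ((algebraMap A QA a) * algebraMap A QA a') ∈ _
        rw [← map_mul]
        exact htr (a * a')
      have hdN : ∀ i, d i ∈ N := fun i => by
        rw [hNd]; exact Submodule.subset_span ⟨i, rfl⟩
      have hw : ∀ i, ∃ w : K,
          (Submodule.Quotient.mk w : K ⧸ imageOfBase R) =
            ψ (Submodule.Quotient.mk (⟨d i, hdN i⟩ : N)) :=
        fun i => Submodule.Quotient.mk_surjective _ _
      choose w hw using hw
      set x : QA := ∑ i, w i • bQ i with hxdef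
      have hrepr : ∀ i, bQ.repr x i = w i := by
        intro i
        rw [hxdef, Module.Basis.repr_sum_self]
      have heval : π ∘ₗ T ∘ₗ (LinearMap.mulLeft R x) ∘ₗ N.subtype = ψ ∘ₗ M'.mkQ := by
        apply Module.Basis.ext bN
        intro i
        show π (T (x * (bN i : QA))) = ψ (Submodule.Quotient.mk (bN i))
        rw [hbN i]
        have hT : T (x * d i) = w i := by
          show Algebra.trace K QA (x * d i) = w i
          rw [L2, hrepr]
        rw [hT]
        have hbNi : (bN i) = (⟨d i, hdN i⟩ : N) := Subtype.ext (hbN i)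
        rw [hbNi]
        exact hw i
      have heval' : ∀ y : N, π (Algebra.trace K QA (x * (y : QA))) =
          ψ (Submodule.Quotient.mk y) := fun y => LinearMap.congr_fun heval y
      have hxN : x ∈ N := by
        intro a
        have hmem : (algebraMap A QA a) ∈ imageOfOrder R A QA := ⟨a, rfl⟩
        have h := heval' ⟨algebraMap A QA a, hMN hmem⟩
        rw [show (Submodule.Quotient.mk (⟨algebraMap A QA a, hMN hmem⟩ : N) : N ⧸ M') = 0 from
          (Submodule.Quotient.mk_eq_zero _).mpr hmem, map_zero] at h
        rw [Submodule.mkQ_apply, Submodule.Quotient.mk_eq_zero] at h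
        obtain ⟨r, hr⟩ := h
        exact ⟨r, hr⟩
      refine ⟨Submodule.Quotient.mk (⟨x, hxN⟩ : N), ?_⟩
      apply LinearMap.ext
      intro v
      obtain ⟨y, rfl⟩ := Submodule.Quotient.mk_surjective M' v
      exact heval' y

end
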